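/- For every permutation σ of {1,2} and every non-negative integer n: (1) (F_σ(n) + V₁) ∩ (F_σ(n) + V₂) = F_σ(n); (2) (F_σ(n) + W₁) ∩ (F_σ(n) + W₂) = F_σ(n). -/

import Mathlib

open Submodule

/-- For a permutation `σ` of `{1,2}`, the increasing sequence of subspaces `F_σ(n)`:
`F_σ(0) = ⊥`, `F_σ(n+1) = Σ_i (F_σ(n) + Vᵢ) ⊓ (F_σ(n) + W_{σ(i)})`. -/
noncomputable def Fsig {K E : Type*} [Field K] [AddCommGroup E] [Module K E]
    (V W : Fin 2 → Submodule K E) (σ : Equiv.Perm (Fin 2)) : ℕ → Submodule K E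
  | 0 => ⊥
  | n + 1 => ⨆ i : Fin 2, (Fsig V W σ n ⊔ V i) ⊓ (Fsig V W σ n ⊔ W (σ i))

private lemma iSup_fin_two' {α : Type*} [CompleteLattice α] (f : Fin 2 → α) :
    (⨆ i, f i) = f 0 ⊔ f 1 := by
  apply le_antisymm
  · exact iSup_le fun i => by fin_cases i <;> simp
  · exact sup_le (le_iSup f 0) (le_iSup f 1)

private lemma key {K E : Type*} [Field K] [AddCommGroup E] [Module K E]
    (F A0 A1 X0 X1 : Submodule K E)
    (hA0 : A0 ≤ F ⊔ X0) (hA1 : A1 ≤ F ⊔ X1)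
    (hF : F ≤ A0)
    (hmod : (F ⊔ X0) ⊓ (F ⊔ X1) ≤ F) :
    ((A0 ⊔ A1) ⊔ X0) ⊓ ((A0 ⊔ A1) ⊔ X1) ≤ A0 ⊔ A1 := by
  intro x hx
  obtain ⟨hx0, hx1⟩ := hx
  rw [show (A0 ⊔ A1) ⊔ X0 = A1 ⊔ (A0 ⊔ X0) by rw [sup_comm A0 A1, sup_assoc]] at hx0
  rw [show (A0 ⊔ A1) ⊔ X1 = A0 ⊔ (A1 ⊔ X1) by rw [sup_assoc]] at hx1
  obtain ⟨a1, ha1, y0, hy0, rfl⟩ := Submodule.mem_sup.mp hx0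
  obtain ⟨a0, ha0, y1, hy1, hx⟩ := Submodule.mem_sup.mp hx1
  have hy0' : y0 ∈ F ⊔ X0 := sup_le hA0 le_sup_right hy0
  have hy1' : y1 ∈ F ⊔ X1 := sup_le hA1 le_sup_right hy1
  have hd : y0 - a0 ∈ F := by
    apply hmod
    constructor
    · exact sub_mem hy0' (hA0 ha0)
    · have : y0 - a0 = y1 - a1 := by
        rw [sub_eq_sub_iff_add_eq_add, add_comm y0 a1, add_comm y1 a0]
        exact hx.symm
      rw [this]
      exact sub_mem hy1' (hA1 ha1)
  have : a1 + y0 = (a0 + (y0 - a0)) + a1 := by abel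
  rw [this]
  exact add_mem (Submodule.mem_sup_left (add_mem ha0 (hF hd))) (Submodule.mem_sup_right ha1)

/-- `F_σ(n)` is co-homogeneous with respect to `V₁ ⊕ V₂` and to `W₁ ⊕ W₂`. -/
theorem stmt6 {K E : Type*} [Field K] [AddCommGroup E] [Module K E]
    [FiniteDimensional K E] (hchar : (2 : K) ≠ 0)
    (V W : Fin 2 → Submodule K E)
    (hV : IsCompl (V 0) (V 1)) (hW : IsCompl (W 0) (W 1)) :
    ∀ (σ : Equiv.Perm (Fin 2)) (n : ℕ),
      (Fsig V W σ n ⊔ V 0) ⊓ (Fsig V W σ n ⊔ V 1) = Fsig V W σ n ∧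
      (Fsig V W σ n ⊔ W 0) ⊓ (Fsig V W σ n ⊔ W 1) = Fsig V W σ n := by
  intro σ n
  induction n with
  | zero =>
    constructor
    · simp [Fsig, hV.disjoint.eq_bot]
    · simp [Fsig, hW.disjoint.eq_bot]
  | succ n ih =>
    obtain ⟨ihV, ihW⟩ := ih
    set F := Fsig V W σ n with hFdef
    set A : Fin 2 → Submodule K E := fun i => (F ⊔ V i) ⊓ (F ⊔ W (σ i)) with hAdef
    have hFs : Fsig V W σ (n + 1) = A 0 ⊔ A 1 := by
      rw [show Fsig V W σ (n+1) = ⨆ i : Fin 2, (F ⊔ V i) ⊓ (F ⊔ W (σ i)) from rfl]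
      exact iSup_fin_two' A
    have hFA : ∀ i, F ≤ A i := fun i => le_inf le_sup_left le_sup_left
    constructor
    · rw [hFs]
      apply le_antisymm
      · exact key F (A 0) (A 1) (V 0) (V 1) inf_le_left inf_le_left (hFA 0) (le_of_eq ihV)
      · exact le_inf le_sup_left le_sup_left
    · rw [hFs]
      have hswap : A 0 ⊔ A 1 = A (σ⁻¹ 0) ⊔ A (σ⁻¹ 1) := by
        rw [← iSup_fin_two' A, ← iSup_fin_two' (fun i => A (σ⁻¹ i))]
        exact (Equiv.iSup_comp (g := A) σ⁻¹).symm
      rw [hswap]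
      apply le_antisymm
      · have h0 : A (σ⁻¹ 0) ≤ F ⊔ W 0 := by
          have : σ (σ⁻¹ 0) = 0 := Equiv.apply_symm_apply σ 0
          rw [hAdef]
          simp only [this]
          exact inf_le_right
        have h1 : A (σ⁻¹ 1) ≤ F ⊔ W 1 := by
          have : σ (σ⁻¹ 1) = 1 := Equiv.apply_symm_apply σ 1
          rw [hAdef]
          simp only [this]
          exact inf_le_right
        exact key F (A (σ⁻¹ 0)) (A (σ⁻¹ 1)) (W 0) (W 1) h0 h1 (hFA _) (le_of_eq ihW)
      · exact le_inf le_sup_left le_sup_left
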